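/- For every finite simple graph G with at least one vertex there exists a proper coloring c of G whose image has at most 2·χ(G) − 1 elements (i.e., c uses at most 2·χ(G) − 1 colors) such that some dominating set of G of size γ(G) is an up-color dominating c-set; in particular the minimum cardinality of an up-color dominating c-set equals γ(G). -/
import Mathlib


/-- `D` is an up-color dominating `c`-set of `G`. -/
def IsUCDomSet {V : Type*} (G : SimpleGraph V) (c : V → ℕ) (D : Finset V) : Prop :=
  (∀ v ∉ D, ∃ d ∈ D, G.Adj v d ∧ c v < c d) ∧ ∀ d ∈ D, 1 ≤ c d

/-- `D` is a dominating set of `G`. -/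
def IsDomSet {V : Type*} (G : SimpleGraph V) (D : Finset V) : Prop :=
  ∀ v ∉ D, ∃ d ∈ D, G.Adj v d

/-- The domination number of `G`. -/
noncomputable def domNum (V : Type*) [Fintype V] (G : SimpleGraph V) : ℕ :=
  sInf {n | ∃ D : Finset V, IsDomSet G D ∧ D.card = n}

/-- The chromatic number of `G` (as a natural number). -/
noncomputable def chromNum {V : Type*} (G : SimpleGraph V) : ℕ :=
  sInf {n | G.Colorable n}

theorem stmt_4 {V : Type*} [Fintype V] [Nonempty V] (G : SimpleGraph V) :
    ∃ c : V → ℕ, (∀ ⦃u v⦄, G.Adj u v → c u ≠ c v) ∧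
      (Finset.univ.image c).card ≤ 2 * chromNum G - 1 ∧
      (∃ D : Finset V, IsDomSet G D ∧ D.card = domNum V G ∧ IsUCDomSet G c D) ∧
      (∀ D : Finset V, IsUCDomSet G c D → domNum V G ≤ D.card) := by
  classical
  have hSne : {n | ∃ D : Finset V, IsDomSet G D ∧ D.card = n}.Nonempty :=
    ⟨(Finset.univ : Finset V).card, Finset.univ,
      fun v hv => absurd (Finset.mem_univ v) hv, rfl⟩
  obtain ⟨D, hD, hDcard⟩ : ∃ D : Finset V, IsDomSet G D ∧ D.card = domNum V G :=
    Nat.sInf_mem hSne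
  have hmin : ∀ c : V → ℕ, ∀ D' : Finset V, IsUCDomSet G c D' → domNum V G ≤ D'.card := by
    intro c D' hUC
    exact Nat.sInf_le ⟨D', fun v hv => by
      obtain ⟨d, hd, hadj, _⟩ := hUC.1 v hv; exact ⟨d, hd, hadj⟩, rfl⟩
  set k := chromNum G with hkdef
  have hmem : Fintype.card V ∈ {n | G.Colorable n} := G.colorable_of_fintype
  have hcol : G.Colorable k := Nat.sInf_mem ⟨_, hmem⟩
  obtain ⟨C⟩ := hcol
  have hk1 : 1 ≤ k := by
    rcases Nat.eq_zero_or_pos k with h0 | h; swap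
    · exact h
    · exfalso; rw [h0] at C; exact (C (Classical.arbitrary V)).elim0
  by_cases hk2 : 2 ≤ k
  · -- main case
    refine ⟨fun v => if v ∈ D then 2 * k - 2 - (C v).val else (C v).val, ?_, ?_, ?_, hmin _⟩
    · intro u v huv
      have hne : ((C u) : Fin k).val ≠ ((C v) : Fin k).val :=
        fun h => C.valid huv (Fin.val_injective h)
      have h1 : ((C u) : Fin k).val < k := (C u).isLt
      have h2 : ((C v) : Fin k).val < k := (C v).isLt
      by_cases hu : u ∈ D <;> by_cases hv : v ∈ D <;> simp [hu, hv] <;> omega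
    · calc (Finset.univ.image fun v => if v ∈ D then 2 * k - 2 - (C v).val else (C v).val).card
          ≤ (Finset.range (2 * k - 1)).card := by
            apply Finset.card_le_card
            intro x hx
            simp only [Finset.mem_image] at hx
            obtain ⟨v, _, rfl⟩ := hx
            have := (C v).isLt
            simp only [Finset.mem_range]
            split <;> omega
        _ = 2 * k - 1 := Finset.card_range _
    · refine ⟨D, hD, hDcard, ?_, ?_⟩
      · intro v hv
        obtain ⟨d, hd, hadj⟩ := hD v hv
        refine ⟨d, hd, hadj, ?_⟩
        have hne : ((C v) : Fin k).val ≠ ((C d) : Fin k).val :=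
          fun h => C.valid hadj (Fin.val_injective h)
        have h1 : ((C v) : Fin k).val < k := (C v).isLt
        have h2 : ((C d) : Fin k).val < k := (C d).isLt
        simp only [if_pos hd, if_neg hv]
        omega
      · intro d hd
        have h2 : ((C d) : Fin k).val < k := (C d).isLt
        simp only [if_pos hd]
        omega
  · -- k = 1: no edges
    have hk : k = 1 := by omega
    have hnoedge : ∀ u v : V, ¬ G.Adj u v := by
      intro u v huv
      have := C.valid huv
      rw [hk] at C
      exact (C.valid huv) (Subsingleton.elim _ _)
    refine ⟨fun _ => 1, fun u v huv => absurd huv (hnoedge u v), ?_, ?_, hmin _⟩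
    · rw [hk, Finset.image_const Finset.univ_nonempty 1]
      simp
    · refine ⟨D, hD, hDcard, ?_, fun d _ => le_refl 1⟩
      intro v hv
      obtain ⟨d, hd, hadj⟩ := hD v hv
      exact absurd hadj (hnoedge v d)
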